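/- (Skew-adjointness of the EQ structure operator M(Φ).) Let N be a positive natural number, and work in ℝ^N with the standard inner product ⟨·,·⟩ and componentwise product ⊙. Let S : ℝ^N → ℝ^N be a bijective linear map with ⟨S v, v⟩ = 0 for all v, fix a ∈ ℝ^N, and define L w = S(a ⊙ w) and L* w = −a ⊙ (S w). Define M : ℝ^N × ℝ^N → ℝ^N × ℝ^N by M(v, w) = ( S v + 2 L w , −2 L* v − 4 L*( S⁻¹ (L w) ) ). Then for all (v, w) ∈ ℝ^N × ℝ^N, ⟨S v + 2 L w, v⟩ + ⟨−2 L* v − 4 L*(S⁻¹(L w)), w⟩ = 0; i.e., ⟨M(v,w), (v,w)⟩ = 0 in the product inner product space. -/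

import Mathlib

open scoped RealInnerProductSpace

/-- Componentwise (pointwise) product on `EuclideanSpace ℝ (Fin N)`. -/
def cwMul {N : ℕ} (v w : EuclideanSpace ℝ (Fin N)) : EuclideanSpace ℝ (Fin N) :=
  WithLp.toLp 2 (fun i => v i * w i)

lemma cwMul_inner_symm {N : ℕ} (a x y : EuclideanSpace ℝ (Fin N)) :
    ⟪cwMul a x, y⟫ = ⟪x, cwMul a y⟫ := by
  simp only [PiLp.inner_apply, RCLike.inner_apply, conj_trivial]
  exact Finset.sum_congr rfl fun i _ => by simp only [cwMul, PiLp.toLp_apply]; ring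

lemma skew_flip {N : ℕ}
    (S : EuclideanSpace ℝ (Fin N) →ₗ[ℝ] EuclideanSpace ℝ (Fin N))
    (hS : ∀ v : EuclideanSpace ℝ (Fin N), ⟪S v, v⟫ = 0)
    (x y : EuclideanSpace ℝ (Fin N)) : ⟪S x, y⟫ = -⟪x, S y⟫ := by
  have h := hS (x + y)
  rw [map_add, inner_add_left, inner_add_right, inner_add_right] at h
  have hx := hS x
  have hy := hS y
  have hxy : ⟪S y, x⟫ = ⟪x, S y⟫ := real_inner_comm _ _
  linarith

/-- skew-adjointness of the EQ structure operator
M(v,w) = (S v + 2 L w, −2 L* v − 4 L*(S⁻¹(L w))), where L w = S(a ⊙ w) and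
L* w = −a ⊙ (S w): one has ⟨M(v,w), (v,w)⟩ = 0. -/
theorem eq_structure_operator_skew
    (N : ℕ) (hN : 0 < N)
    (S : EuclideanSpace ℝ (Fin N) →ₗ[ℝ] EuclideanSpace ℝ (Fin N))
    (hS : ∀ v : EuclideanSpace ℝ (Fin N), ⟪S v, v⟫ = 0)
    (hbij : Function.Bijective S)
    (Sinv : EuclideanSpace ℝ (Fin N) →ₗ[ℝ] EuclideanSpace ℝ (Fin N))
    (hSinv₁ : ∀ v, S (Sinv v) = v) (hSinv₂ : ∀ v, Sinv (S v) = v)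
    (a : EuclideanSpace ℝ (Fin N)) :
    ∀ v w : EuclideanSpace ℝ (Fin N),
      ⟪S v + (2 : ℝ) • S (cwMul a w), v⟫
        + ⟪(-2 : ℝ) • (-(cwMul a (S v)))
            + (-4 : ℝ) • (-(cwMul a (S (Sinv (S (cwMul a w)))))), w⟫ = 0 := by
  intro v w
  rw [hSinv₂]
  rw [inner_add_left, inner_add_left, inner_smul_left, inner_smul_left, inner_smul_left]
  have h1 : ⟪S (cwMul a w), v⟫ = -⟪cwMul a w, S v⟫ := skew_flip S hS _ _
  have h2 : ⟪cwMul a (S v), w⟫ = ⟪S v, cwMul a w⟫ := cwMul_inner_symm a _ _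
  have h3 : ⟪cwMul a (S (cwMul a w)), w⟫ = ⟪S (cwMul a w), cwMul a w⟫ :=
    cwMul_inner_symm a _ _
  have h4 := hS (cwMul a w)
  have h5 : ⟪cwMul a w, S v⟫ = ⟪S v, cwMul a w⟫ := real_inner_comm _ _
  simp only [inner_neg_left]
  rw [hS v, h1, h2, h3, h4, h5]
  simp only [conj_trivial]
  ring
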